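/- Let P be a partition of a positive integer n and let (P_1, …, P_{r+1}; a_1, …, a_r) be a full U-process for P (i.e. P_{r+1} is the empty partition). Then for every 1 ≤ k ≤ r, s(P_k, a_k) = u_k(P) − u_{k−1}(P); that is, the sequence (s(P_1,a_1), s(P_2,a_2), …, s(P_r,a_r)) equals λ_U(P) (and in particular Σ_{k=1}^r s(P_k,a_k) = n, and any two full U-processes for P yield the same partition of n). -/

import Mathlib

/-!
Common definitions for the poset `D_P` attached to a partition `P` of `n`,
its `U`-chains, the quantity `s(P,a)` (cardinality of a simple `U`-chain),
and `U`-processes, following Khatami, "The poset of the nilpotent commutator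
of a nilpotent matrix".

A partition of `n` is encoded by its multiplicity function `np : ℕ →₀ ℕ`
(`np p` = number of parts equal to `p`), with `np 0 = 0` and `Σ p·np p = n`.
-/

/-- Vertices are triples `(u, p, k)`. -/
abbrev Vtx : Type := ℕ × ℕ × ℕ

/-- `np` is the multiplicity function of a partition of `n`. -/
def IsPartitionOf (n : ℕ) (np : ℕ →₀ ℕ) : Prop :=
  np 0 = 0 ∧ (np.sum fun p m => p * m) = n

/-- The vertex set of the diagram `D_P`: triples `(u,p,k)` with
`1 ≤ u ≤ p` and `1 ≤ k ≤ np p`. -/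
def vertexSet (np : ℕ →₀ ℕ) : Set Vtx :=
  {v | 1 ≤ v.1 ∧ v.1 ≤ v.2.1 ∧ 1 ≤ v.2.2 ∧ v.2.2 ≤ np v.2.1}

/-- The set `S_i` for the value `a`:
`S_i = {(u,p,k) : p ∈ {a, a+1}, i ≤ u ≤ p−i+1} ∪ {(u,p,k) : p > a+1, u ∈ {i, p−i+1}}`,
a subset of the vertex set of `D_P`.  (The condition `u ≤ p - i + 1` is written
as `u + i ≤ p + 1` to avoid truncated subtraction.) -/
def Sset (np : ℕ →₀ ℕ) (i a : ℕ) : Set Vtx :=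
  {v ∈ vertexSet np |
    ((v.2.1 = a ∨ v.2.1 = a + 1) ∧ i ≤ v.1 ∧ v.1 + i ≤ v.2.1 + 1) ∨
    (a + 1 < v.2.1 ∧ (v.1 = i ∨ v.1 + i = v.2.1 + 1))}

/-- The `r`-`U`-chain `U_{b 1, …, b r} = S_1 ∪ ⋯ ∪ S_r` in `D_P`. -/
def UChain (np : ℕ →₀ ℕ) (b : ℕ → ℕ) (r : ℕ) : Set Vtx :=
  ⋃ i ∈ Set.Icc 1 r, Sset np i (b i)

/-- `b 1 < b 2 < ⋯ < b r` are positive with consecutive differences at least `2`. -/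
def ValidSeq (b : ℕ → ℕ) (r : ℕ) : Prop :=
  (∀ i, 1 ≤ i → i ≤ r → 1 ≤ b i) ∧ ∀ i, 1 ≤ i → i < r → b i + 2 ≤ b (i + 1)

/-- `s(P,a) = a·n_a + (a+1)·n_{a+1} + 2·Σ_{p>a+1} n_p`, the cardinality of the
simple `U`-chain `U_a` in `D_P`. -/
def sVal (np : ℕ →₀ ℕ) (a : ℕ) : ℕ :=
  a * np a + (a + 1) * np (a + 1) +
    2 * ∑ p ∈ np.support.filter (fun p => a + 1 < p), np p

/-- `a` is optimal for `P`: `U_a` is a maximum simple `U`-chain in `D_P`. -/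
def OptimalFor (np : ℕ →₀ ℕ) (a : ℕ) : Prop :=
  1 ≤ a ∧ ∀ c, 1 ≤ c → sVal np c ≤ sVal np a

/-- `p` is a part of the partition with multiplicity function `np`. -/
def IsPart (np : ℕ →₀ ℕ) (p : ℕ) : Prop := 0 < p ∧ 0 < np p

/-- The covering relation of the poset `D_P`:  `Cov np x y` means `y` covers `x`.
(i)  for consecutive parts `q < p` and `1 ≤ u ≤ q`, `(u, p, np p)` is covered by `(u, q, 1)`;
(ii) for consecutive parts `p < q` and `1 ≤ u ≤ p`, `(u, p, np p)` is covered by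
     `(u + q − p, q, 1)`;
(iii) for a part `p`, `1 ≤ u ≤ p`, `1 ≤ k < np p`, `(u,p,k)` is covered by `(u,p,k+1)`;
(iv) for an isolated part `p` (neither `p−1` nor `p+1` is a part) and `1 ≤ u < p`,
     `(u, p, np p)` is covered by `(u+1, p, 1)`. -/
def Cov (np : ℕ →₀ ℕ) (x y : Vtx) : Prop :=
  (∃ p q u, IsPart np p ∧ IsPart np q ∧ q < p ∧
      (∀ t, q < t → t < p → ¬ IsPart np t) ∧
      1 ≤ u ∧ u ≤ q ∧ x = (u, p, np p) ∧ y = (u, q, 1)) ∨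
  (∃ p q u, IsPart np p ∧ IsPart np q ∧ p < q ∧
      (∀ t, p < t → t < q → ¬ IsPart np t) ∧
      1 ≤ u ∧ u ≤ p ∧ x = (u, p, np p) ∧ y = (u + (q - p), q, 1)) ∨
  (∃ p u k, IsPart np p ∧ 1 ≤ u ∧ u ≤ p ∧ 1 ≤ k ∧ k < np p ∧
      x = (u, p, k) ∧ y = (u, p, k + 1)) ∨
  (∃ p u, IsPart np p ∧ ¬ IsPart np (p - 1) ∧ ¬ IsPart np (p + 1) ∧
      1 ≤ u ∧ u < p ∧ x = (u, p, np p) ∧ y = (u + 1, p, 1))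

/-- The partial order of `D_P`: reflexive–transitive closure of the covering relation. -/
def leD (np : ℕ →₀ ℕ) : Vtx → Vtx → Prop := Relation.ReflTransGen (Cov np)

/-- A chain in `D_P`: a subset of the vertex set that is totally ordered by `leD`. -/
def IsChainD (np : ℕ →₀ ℕ) (C : Set Vtx) : Prop :=
  C ⊆ vertexSet np ∧ ∀ x ∈ C, ∀ y ∈ C, leD np x y ∨ leD np y x

/-- `u_r(P)`: the maximum cardinality of an `r`-`U`-chain in `D_P`. -/
noncomputable def uMax (np : ℕ →₀ ℕ) (r : ℕ) : ℕ :=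
  sSup {m | ∃ b : ℕ → ℕ, ValidSeq b r ∧ (UChain np b r).ncard = m}

/-- The relabeling injection `ι : D_{P'} → D_P` attached to removing `U_a`. -/
def iotaMap (a : ℕ) (v : Vtx) : Vtx :=
  if v.2.1 < a then v else (v.1 + 1, v.2.1 + 2, v.2.2)

/-- `iotaComp aa i = ι_1 ∘ ⋯ ∘ ι_i`, where `ι_j` is the relabeling map for `aa j`. -/
def iotaComp (aa : ℕ → ℕ) : ℕ → Vtx → Vtx
  | 0 => id
  | i + 1 => iotaComp aa i ∘ iotaMap (aa (i + 1))

/-- `(P_1, …, P_{r+1}; a_1, …, a_r)` is a `U`-process of length `r` for `P`: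
`P_1 = P`, each `a_i` is optimal for `P_i`, and `P_{i+1}` is obtained from `P_i`
by deleting the parts equal to `a_i` or `a_i + 1` and decreasing by `2` every
part greater than `a_i + 1`. -/
def IsUProcess (r : ℕ) (np : ℕ →₀ ℕ) (Ps : ℕ → ℕ →₀ ℕ) (aa : ℕ → ℕ) : Prop :=
  Ps 1 = np ∧
    ∀ i, 1 ≤ i → i ≤ r →
      OptimalFor (Ps i) (aa i) ∧
        ∀ m, Ps (i + 1) m = if m < aa i then Ps i m else Ps i (m + 2)

/-- The subset `C_i = (ι_1 ∘ ⋯ ∘ ι_{i−1})(U_{a_i}) ⊆ D_P` of a `U`-process. -/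
def Cset (Ps : ℕ → ℕ →₀ ℕ) (aa : ℕ → ℕ) (i : ℕ) : Set Vtx :=
  iotaComp aa (i - 1) '' Sset (Ps i) 1 (aa i)


/-! ### Auxiliary development -/

namespace UPaux

open Finset

/-- `np` vanishes from `N` on. -/
def Bd (np : ℕ →₀ ℕ) (N : ℕ) : Prop := ∀ m, N ≤ m → np m = 0

lemma bd_exists (np : ℕ →₀ ℕ) : ∃ N, Bd np N := by
  refine ⟨(np.support.sup id) + 1, fun m hm => ?_⟩
  by_contra hc
  have : m ∈ np.support := Finsupp.mem_support_iff.2 hc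
  have := Finset.le_sup (f := id) this
  simp only [id] at this
  omega

lemma bd_mono {np : ℕ →₀ ℕ} {N N' : ℕ} (h : Bd np N) (h2 : N ≤ N') : Bd np N' :=
  fun m hm => h m (le_trans h2 hm)

/-- tail count: number (with multiplicity) of parts `> x`, as a sum up to `N`. -/
def tailN (np : ℕ →₀ ℕ) (x N : ℕ) : ℕ := ∑ p ∈ Finset.Ico (x+1) N, np p

lemma tail_split {np : ℕ →₀ ℕ} {x y N : ℕ} (hxy : x ≤ y) (hyN : y + 1 ≤ N) :
    tailN np x N = (∑ p ∈ Finset.Ico (x+1) (y+1), np p) + tailN np y N := by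
  unfold tailN
  rw [← Finset.sum_Ico_consecutive (fun p => np p) (show x+1 ≤ y+1 by omega) hyN]

lemma tail_succ {np : ℕ →₀ ℕ} {x N : ℕ} (h : x + 1 < N) :
    tailN np x N = np (x+1) + tailN np (x+1) N := by
  unfold tailN
  rw [Finset.sum_eq_sum_Ico_succ_bot (by omega)]

lemma tail_last {np : ℕ →₀ ℕ} {x N : ℕ} (h : Bd np N) (h2 : N ≤ x) :
    tailN np x N = 0 := by
  unfold tailN
  rw [Finset.Ico_eq_empty (by omega), Finset.sum_empty]

lemma sVal_eq {np : ℕ →₀ ℕ} {N : ℕ} (h : Bd np N) (a : ℕ) :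
    sVal np a = a * np a + (a+1) * np (a+1) + 2 * tailN np (a+1) N := by
  unfold sVal tailN
  congr 1
  congr 1
  apply Finset.sum_subset
  · intro p hp
    simp only [Finset.mem_filter, Finsupp.mem_support_iff] at hp
    have : p < N := by
      by_contra hc
      exact hp.1 (h p (by omega))
    simp only [Finset.mem_Ico]
    omega
  · intro p hp hnp
    simp only [Finset.mem_Ico] at hp
    by_contra hc
    exact hnp (Finset.mem_filter.2 ⟨Finsupp.mem_support_iff.2 hc, by omega⟩)

/-- weight of the `i`-th simple chain piece at value `b`. -/
def fvalN (np : ℕ →₀ ℕ) (N i b : ℕ) : ℕ :=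
  (b + 2 - 2*i) * np b + (b + 3 - 2*i) * np (b+1) + 2 * tailN np (b+1) N

lemma fval_one {np : ℕ →₀ ℕ} {N : ℕ} (h : Bd np N) (b : ℕ) :
    fvalN np N 1 b = sVal np b := by
  rw [sVal_eq h]
  unfold fvalN
  have h1 : b + 2 - 2*1 = b := by omega
  have h2 : b + 3 - 2*1 = b + 1 := by omega
  rw [h1, h2]

/-- `fvalN` vs `sVal` : `fvalN np N i b + 2(i-1)(np b + np (b+1)) = sVal np b`
    provided `2i ≤ b+1`. -/
lemma fval_sval {np : ℕ →₀ ℕ} {N i b : ℕ} (h : Bd np N) (hi : 1 ≤ i) (hib : 2*i ≤ b + 1) :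
    fvalN np N i b + 2*(i-1)*(np b + np (b+1)) = sVal np b := by
  rw [sVal_eq h]
  have h1 : b + 2 - 2*i + 2*(i-1) = b := by omega
  have h2 : b + 3 - 2*i + 2*(i-1) = b + 1 := by omega
  have e : fvalN np N i b + 2*(i-1)*(np b + np (b+1))
      = (b+2-2*i + 2*(i-1))*np b + (b+3-2*i+2*(i-1))*np (b+1) + 2*tailN np (b+1) N := by
    unfold fvalN; ring
  rw [e, h1, h2]

end UPaux

namespace UPaux

open Finset

section Del

variable {np np' : ℕ →₀ ℕ} {a N : ℕ}
  (h' : ∀ m, np' m = if m < a then np m else np (m+2))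

include h'

lemma np'_lt {m : ℕ} (hm : m < a) : np' m = np m := by rw [h' m, if_pos hm]

lemma np'_ge {m : ℕ} (hm : a ≤ m) : np' m = np (m+2) := by rw [h' m, if_neg (by omega)]

lemma bd' (hN : Bd np N) : Bd np' N := by
  intro m hm
  rw [h' m]
  split <;> [exact hN m hm; exact hN _ (by omega)]

omit h' in
lemma sum_ext {s : ℕ} (hN : Bd np N) :
    ∑ p ∈ Finset.Ico s (N+2), np p = ∑ p ∈ Finset.Ico s N, np p := by
  symm
  apply Finset.sum_subset
  · apply Finset.Ico_subset_Ico (le_refl _) (by omega)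
  · intro p hp hp2
    simp only [Finset.mem_Ico] at hp hp2
    exact hN p (by omega)

omit h' in
lemma sum_shift (s t : ℕ) :
    ∑ p ∈ Finset.Ico s t, np (p+2) = ∑ p ∈ Finset.Ico (s+2) (t+2), np p := by
  rw [← Finset.map_add_right_Ico, Finset.sum_map]
  rfl

lemma tail_upper {x : ℕ} (hx : a ≤ x + 1) (hN : Bd np N) :
    tailN np' x N = tailN np (x+2) N := by
  unfold tailN
  have e1 : ∑ p ∈ Finset.Ico (x+1) N, np' p = ∑ p ∈ Finset.Ico (x+1) N, np (p+2) := by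
    apply Finset.sum_congr rfl
    intro p hp
    simp only [Finset.mem_Ico] at hp
    exact np'_ge h' (by omega)
  rw [e1, sum_shift, show x+1+2 = x+2+1 by omega, sum_ext hN]

lemma tail_lower {x : ℕ} (hx : x + 1 ≤ a) (hN : Bd np N) (haN : a + 2 ≤ N) :
    tailN np x N = tailN np' x N + (np a + np (a+1)) := by
  unfold tailN
  rw [← Finset.sum_Ico_consecutive (fun p => np p) (show x+1 ≤ a by omega) (show a ≤ N by omega)]
  rw [← Finset.sum_Ico_consecutive (fun p => np' p) (show x+1 ≤ a by omega) (show a ≤ N by omega)]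
  have e1 : ∑ p ∈ Finset.Ico (x+1) a, np' p = ∑ p ∈ Finset.Ico (x+1) a, np p := by
    apply Finset.sum_congr rfl
    intro p hp
    simp only [Finset.mem_Ico] at hp
    exact np'_lt h' (by omega)
  have e2 : ∑ p ∈ Finset.Ico a N, np' p = ∑ p ∈ Finset.Ico (a+2) N, np p := by
    have : ∑ p ∈ Finset.Ico a N, np' p = ∑ p ∈ Finset.Ico a N, np (p+2) := by
      apply Finset.sum_congr rfl
      intro p hp
      simp only [Finset.mem_Ico] at hp
      exact np'_ge h' (by omega)
    rw [this, sum_shift, sum_ext hN]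
  have e3 : ∑ p ∈ Finset.Ico a N, np p
      = np a + np (a+1) + ∑ p ∈ Finset.Ico (a+2) N, np p := by
    rw [Finset.sum_eq_sum_Ico_succ_bot (show a < N by omega),
      Finset.sum_eq_sum_Ico_succ_bot (show a + 1 < N by omega)]
    ring
  rw [e1, e2, e3]
  ring

/-- low block, same index. -/
lemma T1 {i ℓ : ℕ} (hℓ : ℓ + 2 ≤ a) (hN : Bd np N) (haN : a + 2 ≤ N) :
    fvalN np N i ℓ = fvalN np' N i ℓ + 2*(np a + np (a+1)) := by
  unfold fvalN
  rw [np'_lt h' (show ℓ < a by omega), np'_lt h' (show ℓ+1 < a by omega),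
    tail_lower h' (show ℓ+1+1 ≤ a by omega) hN haN]
  ring

/-- upper block, shifted index and value. -/
lemma T2 {i w : ℕ} (hw : a + 2 ≤ w) (hN : Bd np N) :
    fvalN np' N i (w-2) = fvalN np N (i+1) w := by
  unfold fvalN
  rw [np'_ge h' (show a ≤ w-2 by omega), np'_ge h' (show a ≤ w-2+1 by omega),
    tail_upper h' (show a ≤ w-2+1+1 by omega) hN,
    show w-2+2 = w by omega, show w-2+1+2 = w+1 by omega]
  have c1 : w - 2*i = w + 2 - 2*(i+1) := by omega
  have c2 : w + 1 - 2*i = w + 3 - 2*(i+1) := by omega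
  rw [c1, c2]

/-- the merged middle block in `np'`. -/
lemma T3 {i : ℕ} (ha : 1 ≤ a) (hN : Bd np N) :
    fvalN np' N i (a-1) = (a+1-2*i) * np (a-1) + (a+2-2*i) * np (a+2)
      + 2 * tailN np (a+2) N := by
  unfold fvalN
  rw [np'_lt h' (show a-1 < a by omega), show a-1+1 = a by omega,
    np'_ge h' (le_refl a), tail_upper h' (show a ≤ a + 1 by omega) hN]
  have c1 : a - 1 + 2 - 2*i = a+1-2*i := by omega
  have c2 : a - 1 + 3 - 2*i = a+2-2*i := by omega
  rw [c1, c2]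

end Del

lemma vs_mono {b : ℕ → ℕ} {k : ℕ} (hb : ValidSeq b k) :
    ∀ i j, 1 ≤ i → i ≤ j → j ≤ k → b i + 2*(j-i) ≤ b j := by
  intro i j hi hij hjk
  induction j with
  | zero => omega
  | succ j ih =>
    rcases Nat.lt_or_ge i (j+1) with h | h
    · have hj : 1 ≤ j := by omega
      have := hb.2 j hj (by omega)
      have := ih (by omega) (by omega)
      omega
    · have : i = j + 1 := by omega
      subst this
      simp

lemma vs_lb {b : ℕ → ℕ} {k : ℕ} (hb : ValidSeq b k) :
    ∀ i, 1 ≤ i → i ≤ k → 2*i ≤ b i + 1 := by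
  intro i hi hik
  have h1 := hb.1 1 (le_refl _) (by omega)
  have := vs_mono hb 1 i (le_refl _) hi hik
  omega

end UPaux

namespace UPaux

open Finset

section Star

variable {np : ℕ →₀ ℕ} {a N : ℕ}

lemma tail_split3 {v : ℕ} (hN : Bd np N) (hva : v + 2 ≤ a) (haN : a + 2 ≤ N) :
    tailN np (v+1) N
      = (∑ p ∈ Finset.Ico (v+2) a, np p) + np a + np (a+1) + tailN np (a+1) N := by
  unfold tailN
  rw [← Finset.sum_Ico_consecutive (fun p => np p) (show v+1+1 ≤ a by omega)
    (show a ≤ N by omega)]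
  rw [Finset.sum_eq_sum_Ico_succ_bot (show a < N by omega),
    Finset.sum_eq_sum_Ico_succ_bot (show a + 1 < N by omega)]
  show _ + (np a + (np (a+1) + _)) = _
  ring_nf

lemma sval_le (hopt : OptimalFor np a) {c : ℕ} (hc : 1 ≤ c) : sVal np c ≤ sVal np a :=
  hopt.2 c hc

lemma star (hN : Bd np N) (haN : a + 2 ≤ N) (hopt : OptimalFor np a) :
    ∀ d v, 1 ≤ v → v + 2 + d = a →
      (np v : ℤ) + 2*(np (v+1) : ℤ) + 2*((∑ p ∈ Finset.Ico (v+2) a, np p : ℕ) : ℤ)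
        ≤ ((a:ℤ) - v - 1)*(np a : ℤ) + ((a:ℤ) - v)*(np (a+1) : ℤ) := by
  intro d
  induction d with
  | zero =>
    intro v hv hva
    have hva' : a = v + 2 := by omega
    subst hva'
    have hIco : Finset.Ico (v+2) (v+2) = ∅ := Finset.Ico_eq_empty (by omega)
    rw [hIco]
    have f1 := sval_le hopt (show 1 ≤ v + 1 by omega)
    have f2 := sval_le hopt (show 1 ≤ v by omega)
    rw [sVal_eq hN (v+1), sVal_eq hN (v+2), show v+1+1 = v+2 by omega,
      show v+2+1 = v+3 by omega,
      tail_succ (show v + 2 + 1 < N by omega), show v+2+1 = v+3 by omega] at f1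
    rw [sVal_eq hN v, sVal_eq hN (v+2),
      tail_succ (show v + 1 + 1 < N by omega), show v+1+1 = v+2 by omega,
      tail_succ (show v + 2 + 1 < N by omega), show v+2+1 = v+3 by omega] at f2
    set x := (np v : ℤ) with hx
    set y := (np (v+1) : ℤ) with hy
    set z := (np (v+2) : ℤ) with hz
    set w := (np (v+3) : ℤ) with hw
    have hyw : y ≤ w := by
      have h1 : ((v:ℤ)+1) * y ≤ ((v:ℤ)+1) * w := by push_cast at f1; nlinarith [f1]
      exact le_of_mul_le_mul_left h1 (by positivity)
    have h2 : (v:ℤ)*x + ((v:ℤ)+1)*y ≤ (v:ℤ)*z + ((v:ℤ)+1)*w := by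
      push_cast at f2; nlinarith [f2]
    have key : (v:ℤ)*(x + 2*y) ≤ (v:ℤ)*(z + 2*w) := by
      nlinarith [h2, mul_le_mul_of_nonneg_left hyw (show (0:ℤ) ≤ (v:ℤ)-1 by
        have : 1 ≤ v := hv; push_cast; omega)]
    have hxy : x + 2*y ≤ z + 2*w := by
      rcases Nat.eq_or_lt_of_le hv with h | h
      · -- v = 1 : direct from h2
        have : (v:ℤ) = 1 := by exact_mod_cast h.symm
        rw [this] at h2; nlinarith [h2]
      · exact le_of_mul_le_mul_left key (by exact_mod_cast Nat.lt_of_lt_of_le Nat.zero_lt_one hv)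
    simp only [Finset.sum_empty]
    push_cast
    nlinarith [hxy]
  | succ d ih =>
    intro v hv hva
    have hsplit : (∑ p ∈ Finset.Ico (v+2) a, np p)
        = np (v+2) + ∑ p ∈ Finset.Ico (v+3) a, np p := by
      rw [Finset.sum_eq_sum_Ico_succ_bot (show v + 2 < a by omega)]
    have ihv := ih (v+1) (by omega) (by omega)
    rw [show v+1+1 = v+2 by omega, show v+1+2 = v+3 by omega] at ihv
    rcases le_or_gt (np a + np (a+1)) (np v + np (v+1)) with hcase | hcase
    · -- direct from optimality at v
      have f2 := sval_le hopt (show 1 ≤ v by omega)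
      rw [sVal_eq hN v, sVal_eq hN a, tail_split3 hN (by omega) haN] at f2
      have hc' : ((np a : ℤ) + np (a+1)) ≤ (np v : ℤ) + np (v+1) := by exact_mod_cast hcase
      have hmul := mul_le_mul_of_nonneg_left hc' (show (0:ℤ) ≤ (v:ℤ)-1 by
        have : 1 ≤ v := hv; push_cast; omega)
      push_cast at f2 ⊢
      nlinarith [f2, hmul]
    · have hc' : (np v : ℤ) + np (v+1) ≤ (np a : ℤ) + np (a+1) := by
        have : np v + np (v+1) ≤ np a + np (a+1) := by omega
        exact_mod_cast this
      rw [hsplit]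
      push_cast
      push_cast at ihv
      linarith [ihv, hc']

lemma claimC (hN : Bd np N) (haN : a + 2 ≤ N) (hopt : OptimalFor np a)
    {v : ℕ} (hv : 1 ≤ v) (hva : v + 2 ≤ a) :
    (sVal np v : ℤ) + ((v:ℤ)-1)*(((np a : ℤ) + np (a+1)) - ((np v : ℤ) + np (v+1)))
      ≤ sVal np a := by
  have hstar := star hN haN hopt (a - v - 2) v hv (by omega)
  rw [sVal_eq hN v, sVal_eq hN a, tail_split3 hN (by omega) haN]
  push_cast
  push_cast at hstar
  nlinarith [hstar]

lemma claimC2 (hN : Bd np N) (haN : a + 2 ≤ N) (hopt : OptimalFor np a)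
    {v r : ℕ} (hv : 1 ≤ v) (hva : v + 2 ≤ a) (hr : 1 ≤ r) (hrv : 2*(r-1) ≤ v - 1) :
    (sVal np v : ℤ) + 2*((r:ℤ)-1)*(((np a : ℤ) + np (a+1)) - ((np v : ℤ) + np (v+1)))
      ≤ sVal np a := by
  set Δ : ℤ := ((np a : ℤ) + np (a+1)) - ((np v : ℤ) + np (v+1)) with hΔ
  rcases le_or_gt Δ 0 with hd | hd
  · have h1 : (sVal np v : ℤ) ≤ sVal np a := by exact_mod_cast sval_le hopt hv
    have h2 : 2*((r:ℤ)-1)*Δ ≤ 0 := by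
      apply mul_nonpos_of_nonneg_of_nonpos _ hd
      have : 1 ≤ r := hr
      push_cast
      omega
    linarith
  · have hC := claimC hN haN hopt hv hva
    rw [← hΔ] at hC
    have h2 : 2*((r:ℤ)-1)*Δ ≤ ((v:ℤ)-1)*Δ := by
      apply mul_le_mul_of_nonneg_right _ (le_of_lt hd)
      have h3 : 2*(r-1) ≤ v - 1 := hrv
      have : 1 ≤ r := hr
      have : 1 ≤ v := hv
      push_cast
      omega
    linarith [hC, h2]

end Star

end UPaux

namespace UPaux

open Finset

/-- the `u`-section of `S_i` (for chain value `a`) at part size `p`. -/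
def seg (i a p : ℕ) : Finset ℕ :=
  if p = a ∨ p = a + 1 then Finset.Icc i (p+1-i)
  else if a + 1 < p then {i, p+1-i} else ∅

/-- Finset model of `Sset np i a`. -/
def SFin (np : ℕ →₀ ℕ) (N i a : ℕ) : Finset Vtx :=
  (Finset.range N).biUnion fun p => (seg i a p) ×ˢ ({p} ×ˢ Finset.Icc 1 (np p))

lemma mem_SFin {np : ℕ →₀ ℕ} {N i a : ℕ} {v : Vtx} :
    v ∈ SFin np N i a ↔ v.2.1 < N ∧ v.1 ∈ seg i a v.2.1 ∧ 1 ≤ v.2.2 ∧ v.2.2 ≤ np v.2.1 := by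
  obtain ⟨u, p, k⟩ := v
  simp only [SFin, Finset.mem_biUnion, Finset.mem_range, Finset.mem_product,
    Finset.mem_singleton, Finset.mem_Icc]
  constructor
  · rintro ⟨q, hq, hu, hpq, hk⟩
    subst hpq
    exact ⟨hq, hu, hk⟩
  · rintro ⟨hq, hu, hk⟩
    exact ⟨p, hq, hu, rfl, hk⟩

lemma Sset_eq {np : ℕ →₀ ℕ} {N i a : ℕ} (hi : 1 ≤ i) (hia : 2*i ≤ a + 1)
    (hN : Bd np N) : Sset np i a = ↑(SFin np N i a) := by
  ext ⟨u, p, k⟩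
  simp only [Finset.coe_sort_coe, Finset.mem_coe, mem_SFin, Sset, vertexSet,
    Set.mem_setOf_eq, Set.mem_sep_iff]
  constructor
  · rintro ⟨⟨h1, h2, h3, h4⟩, hcase⟩
    have hpN : p < N := by
      by_contra hc
      have := hN p (by omega)
      omega
    refine ⟨hpN, ?_, h3, h4⟩
    unfold seg
    rcases hcase with ⟨hpa, hui, huip⟩ | ⟨hap, hu⟩
    · rw [if_pos hpa]
      simp only [Finset.mem_Icc]
      omega
    · rw [if_neg (by omega), if_pos hap]
      simp only [Finset.mem_insert, Finset.mem_singleton]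
      omega
  · rintro ⟨hpN, hu, hk1, hk2⟩
    unfold seg at hu
    split_ifs at hu with hc1 hc2
    · simp only [Finset.mem_Icc] at hu
      exact ⟨⟨by omega, by omega, hk1, hk2⟩, Or.inl ⟨hc1, by omega, by omega⟩⟩
    · simp only [Finset.mem_insert, Finset.mem_singleton] at hu
      exact ⟨⟨by omega, by omega, hk1, hk2⟩, Or.inr ⟨hc2, by omega⟩⟩
    · simp at hu

lemma card_SFin {np : ℕ →₀ ℕ} {N i a : ℕ} (hi : 1 ≤ i) (hia : 2*i ≤ a + 1)
    (haN : a + 2 ≤ N) : (SFin np N i a).card = fvalN np N i a := by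
  unfold SFin
  rw [Finset.card_biUnion]
  · have hterm : ∀ p, ((seg i a p) ×ˢ ({p} ×ˢ Finset.Icc 1 (np p))).card
        = (seg i a p).card * np p := by
      intro p
      rw [Finset.card_product, Finset.card_product, Finset.card_singleton,
        Nat.card_Icc]
      congr 1
      omega
    simp only [hterm]
    have hsplit : Finset.range N = Finset.Ico 0 N := by
      rw [Finset.range_eq_Ico]
    rw [hsplit,
      ← Finset.sum_Ico_consecutive (fun p => (seg i a p).card * np p)
        (show (0:ℕ) ≤ a by omega) (show a ≤ N by omega),
      Finset.sum_eq_sum_Ico_succ_bot (show a < N by omega),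
      Finset.sum_eq_sum_Ico_succ_bot (show a + 1 < N by omega)]
    have e0 : ∑ p ∈ Finset.Ico 0 a, (seg i a p).card * np p = 0 := by
      apply Finset.sum_eq_zero
      intro p hp
      simp only [Finset.mem_Ico] at hp
      have : seg i a p = ∅ := by
        unfold seg
        rw [if_neg (by omega), if_neg (by omega)]
      rw [this]
      simp
    have e1 : (seg i a a).card = a + 2 - 2*i := by
      unfold seg
      rw [if_pos (Or.inl rfl), Nat.card_Icc]
      omega
    have e2 : (seg i a (a+1)).card = a + 3 - 2*i := by
      unfold seg
      rw [if_pos (Or.inr rfl), Nat.card_Icc]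
      omega
    have e3 : ∑ p ∈ Finset.Ico (a+2) N, (seg i a p).card * np p
        = 2 * tailN np (a+1) N := by
      unfold tailN
      rw [Finset.mul_sum]
      apply Finset.sum_congr (by congr 1)
      intro p hp
      simp only [Finset.mem_Ico] at hp
      have : (seg i a p).card = 2 := by
        unfold seg
        rw [if_neg (by omega), if_pos (by omega)]
        rw [Finset.card_insert_of_notMem (by simp; omega), Finset.card_singleton]
      rw [this]
    rw [e0, e1, e2, e3]
    unfold fvalN
    ring
  · -- disjointness over p
    intro p hp q hq hpq
    simp only [Finset.disjoint_left]
    intro v hv hv2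
    simp only [Finset.mem_product, Finset.mem_singleton] at hv hv2
    exact hpq (hv.2.1.symm.trans hv2.2.1)

lemma seg_disj {i j ai aj p : ℕ} (hij : i < j) (hi : 1 ≤ i)
    (hia : 2*i ≤ ai + 1) (hja : 2*j ≤ aj + 1) (hgap : ai + 2*(j-i) ≤ aj) :
    Disjoint (seg i ai p) (seg j aj p) := by
  rw [Finset.disjoint_left]
  intro u hu1 hu2
  unfold seg at hu1 hu2
  split_ifs at hu1 hu2
  all_goals try exact (Finset.notMem_empty _ hu1).elim
  all_goals try exact (Finset.notMem_empty _ hu2).elim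
  all_goals
    simp only [Finset.mem_Icc, Finset.mem_insert, Finset.mem_singleton] at hu1 hu2
  all_goals omega

lemma SFin_disj {np : ℕ →₀ ℕ} {N k : ℕ} {b : ℕ → ℕ} (hb : ValidSeq b k)
    {i j : ℕ} (hi : i ∈ Finset.Icc 1 k) (hj : j ∈ Finset.Icc 1 k) (hij : i ≠ j) :
    Disjoint (SFin np N i (b i)) (SFin np N j (b j)) := by
  simp only [Finset.mem_Icc] at hi hj
  rw [Finset.disjoint_left]
  intro v hv1 hv2
  rw [mem_SFin] at hv1 hv2
  rcases Nat.lt_or_ge i j with h | h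
  · exact (Finset.disjoint_left.1
      (seg_disj h hi.1 (vs_lb hb i hi.1 hi.2) (vs_lb hb j hj.1 hj.2)
        (vs_mono hb i j hi.1 (le_of_lt h) hj.2)) hv1.2.1) hv2.2.1
  · have h' : j < i := by omega
    exact (Finset.disjoint_left.1
      (seg_disj h' hj.1 (vs_lb hb j hj.1 hj.2) (vs_lb hb i hi.1 hi.2)
        (vs_mono hb j i hj.1 (le_of_lt h') hi.2)) hv2.2.1) hv1.2.1

lemma uchain_card {np : ℕ →₀ ℕ} {N k : ℕ} {b : ℕ → ℕ} (hb : ValidSeq b k)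
    (hN : Bd np N) (hbN : ∀ i, 1 ≤ i → i ≤ k → b i + 2 ≤ N) :
    (UChain np b k).ncard = ∑ i ∈ Finset.Icc 1 k, fvalN np N i (b i) := by
  have hset : UChain np b k = ↑((Finset.Icc 1 k).biUnion fun i => SFin np N i (b i)) := by
    unfold UChain
    ext v
    simp only [Set.mem_iUnion, Set.mem_Icc, Finset.coe_biUnion, Finset.mem_coe,
      Finset.mem_Icc, Set.mem_setOf_eq, exists_prop]
    constructor
    · rintro ⟨i, ⟨hi1, hi2⟩, hv⟩
      rw [Sset_eq hi1 (vs_lb hb i hi1 hi2) hN] at hv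
      exact ⟨i, ⟨hi1, hi2⟩, hv⟩
    · rintro ⟨i, ⟨hi1, hi2⟩, hv⟩
      refine ⟨i, ⟨hi1, hi2⟩, ?_⟩
      rw [Sset_eq hi1 (vs_lb hb i hi1 hi2) hN]
      exact hv
  rw [hset, Set.ncard_coe_finset, Finset.card_biUnion (fun i hi j hj hij => SFin_disj hb hi hj hij)]
  apply Finset.sum_congr rfl
  intro i hi
  simp only [Finset.mem_Icc] at hi
  exact card_SFin hi.1 (vs_lb hb i hi.1 hi.2) (by have := hbN i hi.1 hi.2; omega)

end UPaux

namespace UPaux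

open Finset

def VF (np : ℕ →₀ ℕ) (N : ℕ) : Finset Vtx :=
  (Finset.range N).biUnion fun p => Finset.Icc 1 p ×ˢ ({p} ×ˢ Finset.Icc 1 (np p))

lemma mem_VF {np : ℕ →₀ ℕ} {N : ℕ} {v : Vtx} :
    v ∈ VF np N ↔ v.2.1 < N ∧ 1 ≤ v.1 ∧ v.1 ≤ v.2.1 ∧ 1 ≤ v.2.2 ∧ v.2.2 ≤ np v.2.1 := by
  obtain ⟨u, p, k⟩ := v
  simp only [VF, Finset.mem_biUnion, Finset.mem_range, Finset.mem_product,
    Finset.mem_singleton, Finset.mem_Icc]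
  constructor
  · rintro ⟨q, hq, ⟨h1, h2⟩, hpq, h3, h4⟩
    subst hpq
    exact ⟨hq, h1, h2, h3, h4⟩
  · rintro ⟨hq, h1, h2, h3, h4⟩
    exact ⟨p, hq, ⟨h1, h2⟩, rfl, h3, h4⟩

lemma vertexSet_eq {np : ℕ →₀ ℕ} {N : ℕ} (hN : Bd np N) :
    vertexSet np = ↑(VF np N) := by
  ext v
  rw [Finset.mem_coe, mem_VF]
  simp only [vertexSet, Set.mem_setOf_eq]
  constructor
  · rintro ⟨h1, h2, h3, h4⟩
    refine ⟨?_, h1, h2, h3, h4⟩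
    by_contra hc
    have := hN v.2.1 (by omega)
    omega
  · rintro ⟨_, h1, h2, h3, h4⟩
    exact ⟨h1, h2, h3, h4⟩

lemma Sset_sub {np : ℕ →₀ ℕ} {i a : ℕ} : Sset np i a ⊆ vertexSet np :=
  fun v hv => hv.1

lemma UChain_sub {np : ℕ →₀ ℕ} {b : ℕ → ℕ} {k : ℕ} :
    UChain np b k ⊆ vertexSet np := by
  intro v hv
  simp only [UChain, Set.mem_iUnion, exists_prop] at hv
  obtain ⟨i, _, hv⟩ := hv
  exact Sset_sub hv

lemma uMaxSet_bddAbove (np : ℕ →₀ ℕ) (k : ℕ) :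
    BddAbove {m | ∃ b : ℕ → ℕ, ValidSeq b k ∧ (UChain np b k).ncard = m} := by
  obtain ⟨N, hN⟩ := bd_exists np
  refine ⟨(VF np N).card, ?_⟩
  rintro m ⟨b, hb, rfl⟩
  have hfin : (vertexSet np).Finite := by
    rw [vertexSet_eq hN]; exact (VF np N).finite_toSet
  calc (UChain np b k).ncard ≤ (vertexSet np).ncard := Set.ncard_le_ncard UChain_sub hfin
    _ = (VF np N).card := by rw [vertexSet_eq hN, Set.ncard_coe_finset]

lemma uMaxSet_nonempty (np : ℕ →₀ ℕ) (k : ℕ) :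
    Set.Nonempty {m | ∃ b : ℕ → ℕ, ValidSeq b k ∧ (UChain np b k).ncard = m} := by
  refine ⟨_, fun i => 2*i - 1, ⟨?_, ?_⟩, rfl⟩
  · intro i hi _; show 1 ≤ 2*i - 1; omega
  · intro i hi _; show 2*i - 1 + 2 ≤ 2*(i+1) - 1; omega

lemma le_uMax {np : ℕ →₀ ℕ} {b : ℕ → ℕ} {k : ℕ} (hb : ValidSeq b k) :
    (UChain np b k).ncard ≤ uMax np k :=
  le_csSup (uMaxSet_bddAbove np k) ⟨b, hb, rfl⟩

lemma uMax_attained (np : ℕ →₀ ℕ) (k : ℕ) :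
    ∃ b : ℕ → ℕ, ValidSeq b k ∧ (UChain np b k).ncard = uMax np k := by
  have := Nat.sSup_mem (uMaxSet_nonempty np k) (uMaxSet_bddAbove np k)
  obtain ⟨b, hb, h⟩ := this
  exact ⟨b, hb, h⟩

lemma uMax_zero (np : ℕ →₀ ℕ) : uMax np 0 = 0 := by
  have h : ∀ b : ℕ → ℕ, UChain np b 0 = ∅ := by
    intro b
    unfold UChain
    have : Set.Icc 1 0 = (∅ : Set ℕ) := Set.Icc_eq_empty (by omega)
    rw [this]
    simp
  unfold uMax
  have : {m | ∃ b : ℕ → ℕ, ValidSeq b 0 ∧ (UChain np b 0).ncard = m} = {0} := by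
    ext m
    simp only [Set.mem_setOf_eq, Set.mem_singleton_iff]
    constructor
    · rintro ⟨b, hb, rfl⟩
      rw [h b, Set.ncard_empty]
    · rintro rfl
      refine ⟨fun i => 2*i-1, ⟨?_, ?_⟩, by rw [h _, Set.ncard_empty]⟩
      · intro i hi _; show 1 ≤ 2*i - 1; omega
      · intro i hi _; show 2*i - 1 + 2 ≤ 2*(i+1) - 1; omega
  rw [this, csSup_singleton]

end UPaux

namespace UPaux

open Finset

lemma sum_split {M : Type*} [AddCommMonoid M] (F : ℕ → M) {t k : ℕ} (h : t ≤ k) :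
    ∑ i ∈ Finset.Icc 1 k, F i
      = ∑ i ∈ Finset.Icc 1 t, F i + ∑ i ∈ Finset.Icc (t+1) k, F i := by
  rw [show (1:ℕ) = 0 + 1 by rfl, Finset.Icc_add_one_left_eq_Ioc, Finset.Icc_add_one_left_eq_Ioc, zero_add, Finset.Icc_add_one_left_eq_Ioc,
    Finset.sum_Ioc_consecutive _ (by omega : (0:ℕ) ≤ t) h]

lemma sum_Icc_head {M : Type*} [AddCommMonoid M] (F : ℕ → M) {s e : ℕ} (h : s ≤ e) :
    ∑ i ∈ Finset.Icc s e, F i = F s + ∑ i ∈ Finset.Icc (s+1) e, F i := by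
  rw [← Finset.Ico_add_one_right_eq_Icc, Finset.sum_eq_sum_Ico_succ_bot (by omega), Finset.Ico_add_one_right_eq_Icc]

lemma sum_shift_idx {M : Type*} [AddCommMonoid M] (F : ℕ → M) (s t : ℕ) :
    ∑ j ∈ Finset.Icc s t, F (j+1) = ∑ i ∈ Finset.Icc (s+1) (t+1), F i := by
  rw [← Finset.map_add_right_Icc]
  rw [Finset.sum_map]
  rfl

lemma exists_t {b : ℕ → ℕ} {k a : ℕ} (hb : ValidSeq b k) :
    ∃ t, t ≤ k ∧ (∀ i, 1 ≤ i → i ≤ t → b i + 2 ≤ a) ∧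
      (∀ i, t < i → i ≤ k → a ≤ b i + 1) := by
  classical
  set s := (Finset.Icc 1 k).filter (fun i => b i + 2 ≤ a) with hs
  by_cases hne : s.Nonempty
  · have hmem := Finset.max'_mem s hne
    set t := s.max' hne with ht
    simp only [hs, Finset.mem_filter, Finset.mem_Icc] at hmem
    refine ⟨t, hmem.1.2, ?_, ?_⟩
    · intro i hi1 hit
      have := vs_mono hb i t hi1 hit hmem.1.2
      have := hmem.2
      omega
    · intro i hti hik
      by_contra hc
      have : i ∈ s := by
        simp only [hs, Finset.mem_filter, Finset.mem_Icc]
        exact ⟨⟨by omega, hik⟩, by omega⟩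
      have := Finset.le_max' s i this
      omega
  · refine ⟨0, by omega, by omega, ?_⟩
    intro i h0i hik
    by_contra hc
    exact hne ⟨i, by simp only [hs, Finset.mem_filter, Finset.mem_Icc]; omega⟩

section InsDel

variable {np np' : ℕ →₀ ℕ} {a N : ℕ}

/-- shifting the position index by one costs a width-2 strip. -/
lemma fval_step {j ℓ : ℕ} (hj : 2*(j+1) ≤ ℓ + 2) :
    fvalN np N j ℓ = fvalN np N (j+1) ℓ + 2*(np ℓ + np (ℓ+1)) := by
  unfold fvalN
  have c1 : ℓ + 2 - 2*j = ℓ + 2 - 2*(j+1) + 2 := by omega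
  have c2 : ℓ + 3 - 2*j = ℓ + 3 - 2*(j+1) + 2 := by omega
  rw [c1, c2]
  ring

/-- the central identity: inserting the `a`-block next to a part equal to `a-1`. -/
lemma mid_identity (h' : ∀ m, np' m = if m < a then np m else np (m+2))
    (hN : Bd np N) (haN : a + 3 ≤ N) {t : ℕ} (hta : 2*t + 2 ≤ a) :
    fvalN np N (t+1) (a-1) + fvalN np N (t+2) (a+1) + 2*t*(np a + np (a+1))
      = sVal np a + fvalN np' N (t+1) (a-1) := by
  have ha : 1 ≤ a := by omega
  rw [T3 h' ha hN, sVal_eq hN]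
  unfold fvalN
  rw [show a - 1 + 1 = a by omega,
    tail_succ (show a + 1 < N by omega),
    show a + 1 + 1 = a + 2 by omega,
    tail_succ (show a + 2 < N by omega)]
  zify [show 2*(t+1) ≤ a - 1 + 2 by omega, show 2*(t+1) ≤ a - 1 + 3 by omega,
    show 2*(t+2) ≤ a + 1 + 2 by omega, show 2*(t+2) ≤ a + 1 + 3 by omega,
    show 2*(t+1) ≤ a + 1 by omega, show 2*(t+1) ≤ a + 2 by omega,
    show 1 ≤ a by omega]
  ring

/-- Insertion: enlarging a `U`-chain of `P'` by the simple chain `U_a`. -/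
lemma insertion (h' : ∀ m, np' m = if m < a then np m else np (m+2)) (ha : 1 ≤ a)
    (hN : Bd np N) (haN : a + 3 ≤ N) {m : ℕ} {c : ℕ → ℕ} (hc : ValidSeq c m) :
    ∃ b : ℕ → ℕ, ValidSeq b (m+1) ∧
      ∑ i ∈ Finset.Icc 1 (m+1), fvalN np N i (b i)
        = sVal np a + ∑ j ∈ Finset.Icc 1 m, fvalN np' N j (c j) := by
  obtain ⟨t, htm, hlow, hhigh⟩ := exists_t (a := a) hc
  have hA : ∀ i, 1 ≤ i → i ≤ t → 2*i ≤ c i + 1 := fun i h1 h2 => vs_lb hc i h1 (by omega)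
  have hta : 2*t ≤ a - 1 := by
    rcases Nat.eq_zero_or_pos t with h | h
    · omega
    · have := hA t h (le_refl t)
      have := hlow t h (le_refl t)
      omega
  by_cases hmid : t < m ∧ c (t+1) = a - 1
  · -- case B : a part equal to a-1 is present
    obtain ⟨htm', hct1⟩ := hmid
    have ha2 : 2 ≤ a := by
      have := hc.1 (t+1) (by omega) (by omega)
      omega
    have hta2 : 2*t + 2 ≤ a := by
      have := vs_lb hc (t+1) (by omega) (by omega)
      omega
    have hup : ∀ j, t+2 ≤ j → j ≤ m → a + 1 ≤ c j := by
      intro j hj1 hj2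
      have := vs_mono hc (t+1) j (by omega) (by omega) hj2
      omega
    refine ⟨fun i => if i ≤ t then c i else if i = t+1 then a-1 else
      if i = t+2 then a+1 else c (i-1) + 2, ⟨?_, ?_⟩, ?_⟩
    · intro i hi1 hi2
      simp only []
      split_ifs with h1 h2 h3
      · exact hc.1 i hi1 (by omega)
      · omega
      · omega
      · omega
    · intro i hi1 hi2
      simp only []
      split_ifs with h1 h2 h3 h4 h5 h6 h7 h8 h9 h10
      all_goals try omega
      · exact hc.2 i hi1 (by omega)
      · -- i ≤ t, i+1 = t+1 : c t + 2 ≤ a - 1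
        have : i = t := by omega
        subst this
        have := hc.2 i hi1 (by omega)
        omega
      · -- i = t+2, i + 1 ≥ t+3 : a+1+2 ≤ c (t+2) + 2
        have h9' : i + 1 - 1 = t + 2 := by omega
        rw [h9']
        have := hup (t+2) (le_refl _) (by omega)
        omega
      · -- i ≥ t+3
        have e1 : i - 1 + 1 = i := by omega
        have e2 : i + 1 - 1 = i := by omega
        rw [e2]
        have := hc.2 (i-1) (by omega) (by omega)
        rw [e1] at this
        omega
    · -- the sum identity, case B
      rw [sum_split _ (show t ≤ m+1 by omega),
        sum_Icc_head _ (show t+1 ≤ m+1 by omega),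
        sum_Icc_head _ (show t+2 ≤ m+1 by omega)]
      rw [sum_split (fun j => fvalN np' N j (c j)) (show t ≤ m by omega),
        sum_Icc_head (fun j => fvalN np' N j (c j)) (show t+1 ≤ m by omega)]
      have e1 : ∑ i ∈ Finset.Icc 1 t, fvalN np N i
          (if i ≤ t then c i else if i = t+1 then a-1 else if i = t+2 then a+1
            else c (i-1) + 2)
          = ∑ i ∈ Finset.Icc 1 t, (fvalN np' N i (c i) + 2*(np a + np (a+1))) := by
        apply Finset.sum_congr rfl
        intro i hi
        simp only [Finset.mem_Icc] at hi
        rw [if_pos hi.2]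
        exact T1 h' (hlow i hi.1 hi.2) hN (by omega)
      have e2 : (if t+1 ≤ t then c (t+1) else if t+1 = t+1 then a-1 else
          if t+1 = t+2 then a+1 else c (t+1-1) + 2) = a - 1 := by
        rw [if_neg (by omega), if_pos rfl]
      have e3 : (if t+2 ≤ t then c (t+2) else if t+2 = t+1 then a-1 else
          if t+2 = t+2 then a+1 else c (t+2-1) + 2) = a + 1 := by
        rw [if_neg (by omega), if_neg (by omega), if_pos rfl]
      have e4 : ∑ i ∈ Finset.Icc (t+2+1) (m+1), fvalN np N i
          (if i ≤ t then c i else if i = t+1 then a-1 else if i = t+2 then a+1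
            else c (i-1) + 2)
          = ∑ j ∈ Finset.Icc (t+1+1) m, fvalN np' N j (c j) := by
        rw [show t+1+1 = t+2 by omega,
          ← sum_shift_idx (fun i => fvalN np N i
            (if i ≤ t then c i else if i = t+1 then a-1 else if i = t+2 then a+1
              else c (i-1) + 2)) (t+2) m]
        apply Finset.sum_congr rfl
        intro j hj
        simp only [Finset.mem_Icc] at hj
        rw [if_neg (by omega), if_neg (by omega), if_neg (by omega),
          show j+1-1 = j by omega]
        have hw : a + 2 ≤ c j + 2 := by
          have := hup j hj.1 hj.2
          omega
        have := T2 h' (i := j) hw hN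
        rw [show c j + 2 - 2 = c j by omega] at this
        rw [← this]
      rw [e1]
      beta_reduce
      rw [e2, e3, e4, Finset.sum_add_distrib, Finset.sum_const, Nat.card_Icc,
        show t + 1 - 1 = t by omega, smul_eq_mul, hct1,
        show t * (2 * (np a + np (a+1))) = 2*t*(np a + np (a+1)) by ring]
      have := mid_identity h' hN haN (t := t) (by omega)
      omega
  · -- case A : no part equal to a-1 at position t+1
    have hup : ∀ j, t+1 ≤ j → j ≤ m → a ≤ c j := by
      intro j hj1 hj2
      have h1 := hhigh (t+1) (by omega) (by omega)
      have h2 := vs_mono hc (t+1) j (by omega) hj1 hj2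
      have h3 : c (t+1) ≠ a - 1 := by
        intro hcc
        exact hmid ⟨by omega, hcc⟩
      have h4 := hhigh j (by omega) hj2
      rcases Nat.eq_or_lt_of_le hj1 with h | h
      · subst h; omega
      · omega
    refine ⟨fun i => if i ≤ t then c i else if i = t+1 then a else c (i-1) + 2,
      ⟨?_, ?_⟩, ?_⟩
    · intro i hi1 hi2
      simp only []
      split_ifs with h1 h2
      · exact hc.1 i hi1 (by omega)
      · omega
      · omega
    · intro i hi1 hi2
      simp only []
      split_ifs with h1 h2 h3 h4 h5 h6 h7
      all_goals try omega
      · exact hc.2 i hi1 (by omega)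
      · have : i = t := by omega
        subst this
        have := hlow i hi1 (le_refl _)
        omega
      · -- i = t+1 : a + 2 ≤ c (t+1) + 2
        have e : i + 1 - 1 = t + 1 := by omega
        rw [e]
        have := hup (t+1) (le_refl _) (by omega)
        omega
      · have e1 : i - 1 + 1 = i := by omega
        have e2 : i + 1 - 1 = i := by omega
        rw [e2]
        have := hc.2 (i-1) (by omega) (by omega)
        rw [e1] at this
        omega
    · rw [sum_split _ (show t ≤ m+1 by omega),
        sum_Icc_head _ (show t+1 ≤ m+1 by omega)]
      rw [sum_split (fun j => fvalN np' N j (c j)) (show t ≤ m by omega)]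
      have e1 : ∑ i ∈ Finset.Icc 1 t, fvalN np N i
          (if i ≤ t then c i else if i = t+1 then a else c (i-1) + 2)
          = ∑ i ∈ Finset.Icc 1 t, (fvalN np' N i (c i) + 2*(np a + np (a+1))) := by
        apply Finset.sum_congr rfl
        intro i hi
        simp only [Finset.mem_Icc] at hi
        rw [if_pos hi.2]
        exact T1 h' (hlow i hi.1 hi.2) hN (by omega)
      have e2 : (if t+1 ≤ t then c (t+1) else if t+1 = t+1 then a else c (t+1-1) + 2)
          = a := by
        rw [if_neg (by omega), if_pos rfl]
      have e4 : ∑ i ∈ Finset.Icc (t+1+1) (m+1), fvalN np N i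
          (if i ≤ t then c i else if i = t+1 then a else c (i-1) + 2)
          = ∑ j ∈ Finset.Icc (t+1) m, fvalN np' N j (c j) := by
        rw [← sum_shift_idx (fun i => fvalN np N i
            (if i ≤ t then c i else if i = t+1 then a else c (i-1) + 2)) (t+1) m]
        apply Finset.sum_congr rfl
        intro j hj
        simp only [Finset.mem_Icc] at hj
        rw [if_neg (by omega), if_neg (by omega), show j+1-1 = j by omega]
        have hw : a + 2 ≤ c j + 2 := by
          have := hup j hj.1 hj.2
          omega
        have := T2 h' (i := j) hw hN
        rw [show c j + 2 - 2 = c j by omega] at this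
        rw [← this]
      rw [e1]
      beta_reduce
      rw [e2, e4, Finset.sum_add_distrib, Finset.sum_const, Nat.card_Icc,
        show t + 1 - 1 = t by omega, smul_eq_mul,
        show t * (2 * (np a + np (a+1))) = 2*t*(np a + np (a+1)) by ring]
      have hmidv := fval_sval (i := t+1) (b := a) hN (by omega) (by omega)
      rw [show t + 1 - 1 = t by omega] at hmidv
      omega

end InsDel

end UPaux

namespace UPaux

open Finset

lemma sum_split2 {M : Type*} [AddCommMonoid M] (F : ℕ → M) {s t k : ℕ}
    (hs : 1 ≤ s) (h1 : s ≤ t+1) (h2 : t ≤ k) :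
    ∑ i ∈ Finset.Icc s k, F i
      = ∑ i ∈ Finset.Icc s t, F i + ∑ i ∈ Finset.Icc (t+1) k, F i := by
  rw [show s = (s-1)+1 by omega, Finset.Icc_add_one_left_eq_Ioc, Finset.Icc_add_one_left_eq_Ioc, Finset.Icc_add_one_left_eq_Ioc,
    Finset.sum_Ioc_consecutive _ (show s-1 ≤ t by omega) h2]

section DelLemmas

variable {np np' : ℕ →₀ ℕ} {a N : ℕ}

lemma opt_np_a2 (hopt : OptimalFor np a) (hN : Bd np N) (haN : a + 3 ≤ N) :
    np (a+2) ≤ np a := by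
  have h := sval_le hopt (c := a+1) (by omega)
  rw [sVal_eq hN (a+1), sVal_eq hN a, tail_succ (show a+1+1 < N by omega),
    show a+1+1 = a+2 by omega] at h
  have ha : 1 ≤ a := hopt.1
  have h2 : a * np (a+2) ≤ a * np a := by nlinarith [h]
  exact Nat.le_of_mul_le_mul_left h2 (by omega)

lemma opt_np_am1 (hopt : OptimalFor np a) (hN : Bd np N) (haN : a + 3 ≤ N)
    (ha2 : 2 ≤ a) : np (a-1) ≤ np (a+1) := by
  have h := sval_le hopt (c := a-1) (by omega)
  rw [sVal_eq hN (a-1), sVal_eq hN a, show a-1+1 = a by omega,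
    tail_succ (show a+1 < N by omega)] at h
  have h2 : (a-1) * np (a-1) ≤ (a-1) * np (a+1) := by
    zify [show 1 ≤ a by omega] at h ⊢
    nlinarith [h]
  exact Nat.le_of_mul_le_mul_left h2 (by omega)

lemma del_v_a1 (hopt : OptimalFor np a) (hN : Bd np N) (haN : a + 3 ≤ N)
    {t : ℕ} (hta : 2*t ≤ a) :
    2*t*(np a + np (a+1)) + fvalN np N (t+1) (a+1) ≤ sVal np a := by
  have hS : np (a+2) ≤ np a := opt_np_a2 hopt hN haN
  rw [sVal_eq hN a]
  unfold fvalN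
  rw [tail_succ (show a+1+1 < N by omega), show a+1+1 = a+2 by omega]
  have hSz : ((a:ℤ) - 2*t) * (np (a+2) : ℤ) ≤ ((a:ℤ) - 2*t) * (np a : ℤ) := by
    apply mul_le_mul_of_nonneg_left (by exact_mod_cast hS)
    have : 2*t ≤ a := hta
    push_cast
    omega
  zify [show 2*(t+1) ≤ a+1+2 by omega, show 2*(t+1) ≤ a+1+3 by omega]
  nlinarith [hSz]

lemma del_v_am1 (hopt : OptimalFor np a) (hN : Bd np N) (haN : a + 3 ≤ N)
    {t : ℕ} (ha2 : 2 ≤ a) (hta : 2*t + 2 ≤ a) :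
    2*t*(np a + np (a+1)) + fvalN np N (t+1) (a-1) ≤ sVal np a := by
  have hP : np (a-1) ≤ np (a+1) := opt_np_am1 hopt hN haN ha2
  rw [sVal_eq hN a]
  unfold fvalN
  rw [show a-1+1 = a by omega, tail_succ (show a+1 < N by omega)]
  have hPz : ((a:ℤ) - 1 - 2*t) * (np (a-1) : ℤ) ≤ ((a:ℤ) - 1 - 2*t) * (np (a+1) : ℤ) := by
    apply mul_le_mul_of_nonneg_left (by exact_mod_cast hP)
    have : 2*t + 2 ≤ a := hta
    push_cast
    omega
  zify [show 2*(t+1) ≤ a-1+2 by omega, show 2*(t+1) ≤ a-1+3 by omega,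
    show 1 ≤ a by omega]
  nlinarith [hPz]

variable (h' : ∀ m, np' m = if m < a then np m else np (m+2))

include h'

/-- Construction: drop the value at position `t+1`, keep the `t` low values,
shift the upper values down. -/
lemma del_drop (ha : 1 ≤ a) (hN : Bd np N) (haN : a + 3 ≤ N) {m t : ℕ} {b : ℕ → ℕ}
    (hb : ValidSeq b (m+1)) (htm : t ≤ m)
    (hlow : ∀ i, 1 ≤ i → i ≤ t → b i + 2 ≤ a)
    (hup : ∀ i, t+2 ≤ i → i ≤ m+1 → a + 2 ≤ b i)
    (hloss : 2*t*(np a + np (a+1)) + fvalN np N (t+1) (b (t+1)) ≤ sVal np a) :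
    ∃ c : ℕ → ℕ, ValidSeq c m ∧
      ∑ i ∈ Finset.Icc 1 (m+1), fvalN np N i (b i)
        ≤ sVal np a + ∑ j ∈ Finset.Icc 1 m, fvalN np' N j (c j) := by
  refine ⟨fun j => if j ≤ t then b j else b (j+1) - 2, ⟨?_, ?_⟩, ?_⟩
  · intro j hj1 hj2
    simp only []
    split_ifs with h1
    · exact hb.1 j hj1 (by omega)
    · have := hup (j+1) (by omega) (by omega)
      omega
  · intro j hj1 hj2
    simp only []
    rw [show j+1+1 = j+2 by omega]
    split_ifs with h1 h2 h3
    · exact hb.2 j hj1 (by omega)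
    · -- j = t, next is b (t+2) - 2
      have h4 := hlow j hj1 (by omega)
      have h5 := hup (j+2) (by omega) (by omega)
      omega
    · omega
    · have h4 := hb.2 (j+1) (by omega) (by omega)
      have h5 := hup (j+1) (by omega) (by omega)
      rw [show j+1+1 = j+2 by omega] at h4
      omega
  · rw [sum_split _ (show t ≤ m+1 by omega),
      sum_Icc_head _ (show t+1 ≤ m+1 by omega),
      sum_split (fun j => fvalN np' N j
        (if j ≤ t then b j else b (j+1) - 2)) htm]
    beta_reduce
    have e1 : ∑ i ∈ Finset.Icc 1 t, fvalN np N i (b i)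
        = ∑ i ∈ Finset.Icc 1 t, (fvalN np' N i (b i) + 2*(np a + np (a+1))) := by
      apply Finset.sum_congr rfl
      intro i hi
      simp only [Finset.mem_Icc] at hi
      exact T1 h' (hlow i hi.1 hi.2) hN (by omega)
    have e2 : ∑ j ∈ Finset.Icc 1 t, fvalN np' N j (if j ≤ t then b j else b (j+1) - 2)
        = ∑ j ∈ Finset.Icc 1 t, fvalN np' N j (b j) := by
      apply Finset.sum_congr rfl
      intro j hj
      simp only [Finset.mem_Icc] at hj
      rw [if_pos hj.2]
    have e3 : ∑ j ∈ Finset.Icc (t+1) m, fvalN np' N j (if j ≤ t then b j else b (j+1) - 2)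
        = ∑ i ∈ Finset.Icc (t+1+1) (m+1), fvalN np N i (b i) := by
      rw [← sum_shift_idx (fun i => fvalN np N i (b i)) (t+1) m]
      apply Finset.sum_congr rfl
      intro j hj
      simp only [Finset.mem_Icc] at hj
      rw [if_neg (by omega)]
      exact T2 h' (hup (j+1) (by omega) (by omega)) hN
    rw [e1, e2, e3, Finset.sum_add_distrib, Finset.sum_const, Nat.card_Icc,
      show t + 1 - 1 = t by omega, smul_eq_mul,
      show t * (2 * (np a + np (a+1))) = 2*t*(np a + np (a+1)) by ring]
    omega

/-- Construction: merge the pair `a-1, a+1` into the part `a-1` of `np'`. -/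
lemma del_mid (ha : 1 ≤ a) (hN : Bd np N) (haN : a + 3 ≤ N) {m t : ℕ} {b : ℕ → ℕ}
    (hb : ValidSeq b (m+1)) (htm : t + 1 ≤ m)
    (hlow : ∀ i, 1 ≤ i → i ≤ t → b i + 2 ≤ a)
    (hv1 : b (t+1) = a - 1) (hv2 : b (t+2) = a + 1) :
    ∃ c : ℕ → ℕ, ValidSeq c m ∧
      ∑ i ∈ Finset.Icc 1 (m+1), fvalN np N i (b i)
        ≤ sVal np a + ∑ j ∈ Finset.Icc 1 m, fvalN np' N j (c j) := by
  have ha2 : 2 ≤ a := by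
    have := hb.1 (t+1) (by omega) (by omega)
    omega
  have hta2 : 2*t + 2 ≤ a := by
    have := vs_lb hb (t+1) (by omega) (by omega)
    omega
  have hup : ∀ i, t+3 ≤ i → i ≤ m+1 → a + 2 ≤ b i := by
    intro i hi1 hi2
    have := vs_mono hb (t+2) i (by omega) (by omega) hi2
    omega
  refine ⟨fun j => if j ≤ t then b j else if j = t+1 then a-1 else b (j+1) - 2,
    ⟨?_, ?_⟩, ?_⟩
  · intro j hj1 hj2
    simp only []
    split_ifs with h1 h2
    · exact hb.1 j hj1 (by omega)
    · omega
    · have := hup (j+1) (by omega) (by omega)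
      omega
  · intro j hj1 hj2
    simp only []
    rw [show j+1+1 = j+2 by omega]
    split_ifs with h1 h2 h3 h4 h5 h6 h7
    all_goals try omega
    · exact hb.2 j hj1 (by omega)
    · -- j = t : b t + 2 ≤ a - 1
      have h8 := hb.2 j hj1 (by omega)
      have : j = t := by omega
      subst this
      rw [hv1] at h8
      omega
    · -- j = t+1 : a - 1 + 2 ≤ b (j+2) - 2
      have h9 := vs_mono hb (t+2) (j+2) (by omega) (by omega) (by omega)
      rw [hv2] at h9
      omega
    · have h8 := hb.2 (j+1) (by omega) (by omega)
      have h9 := vs_mono hb (t+2) (j+1) (by omega) (by omega) (by omega)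
      rw [hv2] at h9
      rw [show j+1+1 = j+2 by omega] at h8
      omega
  · rw [sum_split _ (show t ≤ m+1 by omega),
      sum_Icc_head _ (show t+1 ≤ m+1 by omega),
      sum_Icc_head _ (show t+2 ≤ m+1 by omega),
      sum_split (fun j => fvalN np' N j
        (if j ≤ t then b j else if j = t+1 then a-1 else b (j+1) - 2))
        (show t ≤ m by omega),
      sum_Icc_head (fun j => fvalN np' N j
        (if j ≤ t then b j else if j = t+1 then a-1 else b (j+1) - 2))
        (show t+1 ≤ m by omega)]
    beta_reduce
    have e1 : ∑ i ∈ Finset.Icc 1 t, fvalN np N i (b i)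
        = ∑ i ∈ Finset.Icc 1 t, (fvalN np' N i (b i) + 2*(np a + np (a+1))) := by
      apply Finset.sum_congr rfl
      intro i hi
      simp only [Finset.mem_Icc] at hi
      exact T1 h' (hlow i hi.1 hi.2) hN (by omega)
    have e2 : ∑ j ∈ Finset.Icc 1 t, fvalN np' N j
        (if j ≤ t then b j else if j = t+1 then a-1 else b (j+1) - 2)
        = ∑ j ∈ Finset.Icc 1 t, fvalN np' N j (b j) := by
      apply Finset.sum_congr rfl
      intro j hj
      simp only [Finset.mem_Icc] at hj
      rw [if_pos hj.2]
    have e3 : (if t+1 ≤ t then b (t+1) else if t+1 = t+1 then a-1 else b (t+1+1) - 2)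
        = a - 1 := by
      rw [if_neg (by omega), if_pos rfl]
    have e4 : ∑ j ∈ Finset.Icc (t+1+1) m, fvalN np' N j
        (if j ≤ t then b j else if j = t+1 then a-1 else b (j+1) - 2)
        = ∑ i ∈ Finset.Icc (t+2+1) (m+1), fvalN np N i (b i) := by
      rw [show t+1+1 = t+2 by omega,
        ← sum_shift_idx (fun i => fvalN np N i (b i)) (t+2) m]
      apply Finset.sum_congr rfl
      intro j hj
      simp only [Finset.mem_Icc] at hj
      rw [if_neg (by omega), if_neg (by omega)]
      exact T2 h' (hup (j+1) (by omega) (by omega)) hN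
    rw [e1, e2, e3, e4, Finset.sum_add_distrib, Finset.sum_const, Nat.card_Icc,
      show t + 1 - 1 = t by omega, smul_eq_mul,
      show t * (2 * (np a + np (a+1))) = 2*t*(np a + np (a+1)) by ring]
    have hmi := mid_identity h' hN haN (t := t) (by omega)
    rw [hv1, hv2]
    omega

end DelLemmas

end UPaux

namespace UPaux

open Finset

section DelLow

variable {np np' : ℕ →₀ ℕ} {a N : ℕ}
  (h' : ∀ m, np' m = if m < a then np m else np (m+2))

include h'

lemma del_low (hopt : OptimalFor np a) (hN : Bd np N) (haN : a + 3 ≤ N)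
    {m t : ℕ} {b : ℕ → ℕ} (hb : ValidSeq b (m+1)) (ht1 : 1 ≤ t) (htm : t ≤ m+1)
    (hlow : ∀ i, 1 ≤ i → i ≤ t → b i + 2 ≤ a)
    (hup : ∀ i, t+1 ≤ i → i ≤ m+1 → a + 2 ≤ b i) :
    ∃ c : ℕ → ℕ, ValidSeq c m ∧
      ∑ i ∈ Finset.Icc 1 (m+1), fvalN np N i (b i)
        ≤ sVal np a + ∑ j ∈ Finset.Icc 1 m, fvalN np' N j (c j) := by
  classical
  have ha : 1 ≤ a := hopt.1
  -- choose the drop position r among the low values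
  obtain ⟨r, hr1, hrt, htrail, hkey⟩ :
      ∃ r, 1 ≤ r ∧ r ≤ t ∧
        (∀ i, r < i → i ≤ t → np a + np (a+1) ≤ np (b i) + np (b i + 1)) ∧
        (sVal np (b r) + 2*(r-1)*(np a + np (a+1))
          ≤ sVal np a + 2*(r-1)*(np (b r) + np (b r + 1))) := by
    set rs := (Finset.Icc 1 t).filter
      (fun j => np (b j) + np (b j + 1) < np a + np (a+1)) with hrs
    by_cases hne : rs.Nonempty
    · have hmem := Finset.max'_mem rs hne
      set r := rs.max' hne with hrdef
      simp only [hrs, Finset.mem_filter, Finset.mem_Icc] at hmem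
      refine ⟨r, hmem.1.1, hmem.1.2, ?_, ?_⟩
      · intro i hri hit
        by_contra hc
        have : i ∈ rs := by
          simp only [hrs, Finset.mem_filter, Finset.mem_Icc]
          exact ⟨⟨by omega, hit⟩, by omega⟩
        have := Finset.le_max' rs i this
        omega
      · have hbr1 : 1 ≤ b r := hb.1 r hmem.1.1 (by omega)
        have hbra : b r + 2 ≤ a := hlow r hmem.1.1 hmem.1.2
        have hlb := vs_lb hb r hmem.1.1 (by omega)
        have hC := claimC2 hN (by omega) hopt (v := b r) (r := r) hbr1 hbra hmem.1.1
          (by omega)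
        have : ((sVal np (b r) + 2*(r-1)*(np a + np (a+1)) : ℕ) : ℤ)
            ≤ ((sVal np a + 2*(r-1)*(np (b r) + np (b r + 1)) : ℕ) : ℤ) := by
          push_cast [Nat.cast_sub hmem.1.1]
          push_cast at hC
          nlinarith [hC]
        exact_mod_cast this
    · refine ⟨1, le_refl _, ht1, ?_, ?_⟩
      · intro i h1i hit
        by_contra hc
        exact hne ⟨i, by
          simp only [hrs, Finset.mem_filter, Finset.mem_Icc]; omega⟩
      · simp only [Nat.sub_self, Nat.mul_zero, Nat.zero_mul, Nat.add_zero,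
          Nat.mul_one]
        have := sval_le hopt (hb.1 1 (le_refl _) (by omega))
        omega
  -- the new sequence
  refine ⟨fun j => if j < r then b j else if j < t then b (j+1) else b (j+1) - 2,
    ⟨?_, ?_⟩, ?_⟩
  · intro j hj1 hj2
    simp only []
    split_ifs with h1 h2
    · exact hb.1 j hj1 (by omega)
    · exact hb.1 (j+1) (by omega) (by omega)
    · have := hup (j+1) (by omega) (by omega)
      omega
  · intro j hj1 hj2
    simp only []
    rw [show j+1+1 = j+2 by omega]
    have f1 := hb.2 j hj1 (by omega)
    have f2 := hb.2 (j+1) (by omega) (by omega)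
    rw [show j+1+1 = j+2 by omega] at f2
    split_ifs with h1 h2 h3 h4 h5 h6 h7 h8 h9
    all_goals try have g1 := hlow (j+1) (by omega) (by omega)
    all_goals try have g2 := hup (j+2) (by omega) (by omega)
    all_goals try have g3 := hup (j+1) (by omega) (by omega)
    all_goals omega
  · -- the sum estimate
    rw [sum_split _ (show r-1 ≤ m+1 by omega), show r-1+1 = r by omega,
      sum_Icc_head _ (show r ≤ m+1 by omega),
      sum_split2 _ (show 1 ≤ r+1 by omega) (show r+1 ≤ t+1 by omega)
        (show t ≤ m+1 by omega)]
    rw [sum_split (fun j => fvalN np' N j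
        (if j < r then b j else if j < t then b (j+1) else b (j+1) - 2))
        (show r-1 ≤ m by omega), show r-1+1 = r by omega,
      sum_split2 (fun j => fvalN np' N j
        (if j < r then b j else if j < t then b (j+1) else b (j+1) - 2))
        (show 1 ≤ r by omega) (show r ≤ (t-1)+1 by omega) (show t-1 ≤ m by omega),
      show t-1+1 = t by omega]
    beta_reduce
    have e1 : ∑ i ∈ Finset.Icc 1 (r-1), fvalN np N i (b i)
        = ∑ i ∈ Finset.Icc 1 (r-1), fvalN np' N i (b i)
          + 2*(r-1)*(np a + np (a+1)) := by
      have estep : ∑ i ∈ Finset.Icc 1 (r-1), fvalN np N i (b i)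
          = ∑ i ∈ Finset.Icc 1 (r-1), (fvalN np' N i (b i) + 2*(np a + np (a+1))) := by
        apply Finset.sum_congr rfl
        intro i hi
        simp only [Finset.mem_Icc] at hi
        exact T1 h' (hlow i hi.1 (by omega)) hN (by omega)
      rw [estep, Finset.sum_add_distrib, Finset.sum_const, Nat.card_Icc, smul_eq_mul,
        show r-1+1-1 = r-1 by omega]
      ring
    have e1' : ∑ j ∈ Finset.Icc 1 (r-1), fvalN np' N j
        (if j < r then b j else if j < t then b (j+1) else b (j+1) - 2)
        = ∑ j ∈ Finset.Icc 1 (r-1), fvalN np' N j (b j) := by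
      apply Finset.sum_congr rfl
      intro j hj
      simp only [Finset.mem_Icc] at hj
      rw [if_pos (by omega)]
    have e2 : ∑ i ∈ Finset.Icc (r+1) t, fvalN np N i (b i)
        ≤ ∑ j ∈ Finset.Icc r (t-1), fvalN np' N j
          (if j < r then b j else if j < t then b (j+1) else b (j+1) - 2) := by
      rw [show (r+1) = r+1 from rfl, show t = (t-1)+1 by omega,
        ← sum_shift_idx (fun i => fvalN np N i (b i)) r (t-1)]
      apply Finset.sum_le_sum
      intro j hj
      simp only [Finset.mem_Icc] at hj
      rw [if_neg (by omega), if_pos (by omega)]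
      -- termwise : fvalN np (j+1) (b (j+1)) ≤ fvalN np' j (b (j+1))
      have hT1 := T1 h' (i := j) (hlow (j+1) (by omega) (by omega)) hN (by omega)
      have hstep := fval_step (np := np) (N := N) (j := j) (ℓ := b (j+1))
        (by have := vs_lb hb (j+1) (by omega) (by omega); omega)
      have htr := htrail (j+1) (by omega) (by omega)
      omega
    have e3 : ∑ i ∈ Finset.Icc (t+1) (m+1), fvalN np N i (b i)
        = ∑ j ∈ Finset.Icc t m, fvalN np' N j
          (if j < r then b j else if j < t then b (j+1) else b (j+1) - 2) := by
      rw [show (t+1) = t+1 from rfl, show m+1 = m+1 from rfl,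
        ← sum_shift_idx (fun i => fvalN np N i (b i)) t m]
      symm
      apply Finset.sum_congr rfl
      intro j hj
      simp only [Finset.mem_Icc] at hj
      rw [if_neg (by omega), if_neg (by omega)]
      exact T2 h' (hup (j+1) (by omega) (by omega)) hN
    have e4 := fval_sval (np := np) (N := N) (i := r) (b := b r) hN hr1
      (vs_lb hb r hr1 (by omega))
    rw [e1, e1']
    omega

end DelLow

end UPaux

namespace UPaux

open Finset

section Driver

variable {np np' : ℕ →₀ ℕ} {a N : ℕ}

lemma tailN_indep {x N N' : ℕ} (hN : Bd np N) (hN' : Bd np N') :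
    tailN np x N = tailN np x N' := by
  unfold tailN
  rcases le_total N N' with h | h
  · apply Finset.sum_subset (Finset.Ico_subset_Ico (le_refl _) h)
    intro p hp hp2
    simp only [Finset.mem_Ico] at hp hp2
    exact hN p (by omega)
  · symm
    apply Finset.sum_subset (Finset.Ico_subset_Ico (le_refl _) h)
    intro p hp hp2
    simp only [Finset.mem_Ico] at hp hp2
    exact hN' p (by omega)

lemma fvalN_indep {i b N N' : ℕ} (hN : Bd np N) (hN' : Bd np N') :
    fvalN np N i b = fvalN np N' i b := by
  unfold fvalN
  rw [tailN_indep hN hN']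

lemma uchain_card' {k : ℕ} {b : ℕ → ℕ} (hb : ValidSeq b k) (hN : Bd np N) :
    (UChain np b k).ncard = ∑ i ∈ Finset.Icc 1 k, fvalN np N i (b i) := by
  set Nb := N + (∑ i ∈ Finset.Icc 1 k, b i) + 2 with hNb
  have hNb' : Bd np Nb := bd_mono hN (by omega)
  have hbound : ∀ i, 1 ≤ i → i ≤ k → b i + 2 ≤ Nb := by
    intro i h1 h2
    have : b i ≤ ∑ i ∈ Finset.Icc 1 k, b i :=
      Finset.single_le_sum (fun _ _ => Nat.zero_le _) (Finset.mem_Icc.2 ⟨h1, h2⟩)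
    omega
  rw [uchain_card hb hNb' hbound]
  exact Finset.sum_congr rfl fun i _ => fvalN_indep hNb' hN

variable (h' : ∀ m, np' m = if m < a then np m else np (m+2))

include h'

lemma deletion (hopt : OptimalFor np a) (hN : Bd np N) (haN : a + 3 ≤ N)
    {m : ℕ} {b : ℕ → ℕ} (hb : ValidSeq b (m+1)) :
    ∃ c : ℕ → ℕ, ValidSeq c m ∧
      ∑ i ∈ Finset.Icc 1 (m+1), fvalN np N i (b i)
        ≤ sVal np a + ∑ j ∈ Finset.Icc 1 m, fvalN np' N j (c j) := by
  have ha : 1 ≤ a := hopt.1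
  obtain ⟨t, htm1, hlow, hhigh⟩ := exists_t (a := a) hb
  by_cases hcase1 : t = m+1
  · -- all values low
    exact del_low h' hopt hN haN hb (by omega) (by omega) hlow
      (fun i h1 h2 => by omega)
  · have htm : t ≤ m := by omega
    have hv := hhigh (t+1) (by omega) (by omega)
    by_cases hcase2 : a + 2 ≤ b (t+1)
    · by_cases ht0 : t = 0
      · -- drop the first (upper) value
        have hup : ∀ i, t+2 ≤ i → i ≤ m+1 → a + 2 ≤ b i := by
          intro i h1 h2
          have := vs_mono hb (t+1) i (by omega) (by omega) h2
          omega
        have hloss : 2*t*(np a + np (a+1)) + fvalN np N (t+1) (b (t+1)) ≤ sVal np a := by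
          have hz : 2*t*(np a + np (a+1)) = 0 := by rw [ht0]; ring
          have he := fval_sval (np := np) (N := N) (i := t+1) (b := b (t+1)) hN (by omega)
            (vs_lb hb (t+1) (by omega) (by omega))
          rw [show t+1-1 = t by omega] at he
          have hz2 : 2*t*(np (b (t+1)) + np (b (t+1) + 1)) = 0 := by rw [ht0]; ring
          have hs := sval_le hopt (hb.1 (t+1) (by omega) (by omega))
          omega
        exact del_drop h' ha hN haN hb htm hlow hup hloss
      · have hup : ∀ i, t+1 ≤ i → i ≤ m+1 → a + 2 ≤ b i := by
          intro i h1 h2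
          have := vs_mono hb (t+1) i (by omega) h1 h2
          omega
        exact del_low h' hopt hN haN hb (by omega) (by omega) hlow hup
    · -- b (t+1) ∈ {a-1, a, a+1}
      have hv2 : a - 1 ≤ b (t+1) ∧ b (t+1) ≤ a + 1 := by omega
      by_cases hmid2 : t+2 ≤ m+1 ∧ b (t+1) = a - 1 ∧ b (t+2) = a + 1
      · exact del_mid h' ha hN haN hb (by omega) hlow hmid2.2.1 hmid2.2.2
      · have hup : ∀ i, t+2 ≤ i → i ≤ m+1 → a + 2 ≤ b i := by
          intro i h1 h2
          have hm2 := vs_mono hb (t+1) i (by omega) (by omega) h2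
          have hm3 := vs_mono hb (t+2) i (by omega) h1 h2
          by_cases hbt : b (t+1) = a - 1
          · have hne : b (t+2) ≠ a+1 := by
              intro hc
              exact hmid2 ⟨by omega, hbt, hc⟩
            have hg := hb.2 (t+1) (by omega) (by omega)
            rw [show t+1+1 = t+2 by omega] at hg
            omega
          · omega
        have hlb := vs_lb hb (t+1) (by omega) (by omega)
        have hloss : 2*t*(np a + np (a+1)) + fvalN np N (t+1) (b (t+1)) ≤ sVal np a := by
          have hcases : b (t+1) = a - 1 ∨ b (t+1) = a ∨ b (t+1) = a + 1 := by omega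
          rcases hcases with h | h | h
          · rw [h]
            have ha2 : 2 ≤ a := by
              have := hb.1 (t+1) (by omega) (by omega)
              omega
            exact del_v_am1 hopt hN haN ha2 (by omega)
          · rw [h]
            have := fval_sval (np := np) (N := N) (i := t+1) (b := a) hN (by omega)
              (by omega)
            rw [show t+1-1 = t by omega] at this
            omega
          · rw [h]
            exact del_v_a1 hopt hN haN (by omega)
        exact del_drop h' ha hN haN hb htm hlow hup hloss

/-- MAIN STEP: one step of the U-process computes `uMax`. -/
lemma main_step (hopt : OptimalFor np a) {k : ℕ} (hk : 1 ≤ k) :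
    uMax np k = sVal np a + uMax np' (k-1) := by
  obtain ⟨m, rfl⟩ : ∃ m, k = m + 1 := ⟨k - 1, by omega⟩
  rw [show m+1-1 = m by omega]
  obtain ⟨N0, hN0⟩ := bd_exists np
  have hN : Bd np (N0 + a + 3) := bd_mono hN0 (by omega)
  have hN' : Bd np' (N0 + a + 3) := bd' h' hN
  have haN : a + 3 ≤ N0 + a + 3 := by omega
  apply le_antisymm
  · obtain ⟨b, hb, hbc⟩ := uMax_attained np (m+1)
    obtain ⟨c, hc, hsum⟩ := deletion h' hopt hN haN hb
    have h1 := uchain_card' hb hN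
    have h2 := uchain_card' hc hN'
    have h3 := le_uMax (np := np') hc
    omega
  · obtain ⟨c, hc, hcc⟩ := uMax_attained np' m
    obtain ⟨b, hb, hsum⟩ := insertion h' hopt.1 hN haN hc
    have h1 := uchain_card' hb hN
    have h2 := uchain_card' hc hN'
    have h3 := le_uMax (np := np) hb
    omega

end Driver

/-- the telescoping claim along a U-process. -/
lemma process_claim {r : ℕ} {Ps : ℕ → ℕ →₀ ℕ} {aa : ℕ → ℕ}
    (hproc : ∀ i, 1 ≤ i → i ≤ r →
      OptimalFor (Ps i) (aa i) ∧
        ∀ m, Ps (i + 1) m = if m < aa i then Ps i m else Ps i (m + 2)) :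
    ∀ k j, 1 ≤ j → j + k ≤ r + 1 →
      uMax (Ps j) k = ∑ i ∈ Finset.Icc j (j+k-1), sVal (Ps i) (aa i) := by
  intro k
  induction k with
  | zero =>
    intro j hj1 hj2
    rw [uMax_zero, Finset.Icc_eq_empty (by omega), Finset.sum_empty]
  | succ k ih =>
    intro j hj1 hj2
    have hjr : j ≤ r := by omega
    obtain ⟨hopt, hstep⟩ := hproc j hj1 hjr
    have hms := main_step hstep hopt (k := k+1) (by omega)
    rw [show k+1-1 = k by omega] at hms
    rw [hms, ih (j+1) (by omega) (by omega)]
    rw [show j+(k+1)-1 = j+k by omega, show (j+1)+k-1 = j+k by omega]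
    rw [sum_Icc_head (fun i => sVal (Ps i) (aa i)) (show j ≤ j+k by omega)]

end UPaux

/-- Theorem 2.7, fullness: for a full `U`-process
`(P_1,…,P_{r+1}; a_1,…,a_r)` for `P`, one has `s(P_k, a_k) = u_k(P) − u_{k−1}(P)` for
`1 ≤ k ≤ r`; that is, the resulting sequence is `λ_U(P)`. -/
theorem full_uprocess_gives_lambdaU
    (n : ℕ) (hn : 0 < n) (np : ℕ →₀ ℕ) (hP : IsPartitionOf n np)
    (r : ℕ) (Ps : ℕ → ℕ →₀ ℕ) (aa : ℕ → ℕ) (hproc : IsUProcess r np Ps aa)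
    (hfull : ∀ m, Ps (r + 1) m = 0) :
    ∀ k, 1 ≤ k → k ≤ r → uMax np k = uMax np (k - 1) + sVal (Ps k) (aa k) := by
  intro k hk1 hk2
  obtain ⟨hP1, hproc2⟩ := hproc
  subst hP1
  have h1 := UPaux.process_claim hproc2 k 1 (le_refl _) (by omega)
  have h2 := UPaux.process_claim hproc2 (k-1) 1 (le_refl _) (by omega)
  rw [show 1+k-1 = k by omega] at h1
  rw [show 1+(k-1)-1 = k-1 by omega] at h2
  rw [h1, h2]
  rw [UPaux.sum_split (fun i => sVal (Ps i) (aa i)) (show k-1 ≤ k by omega),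
    show k-1+1 = k by omega, Finset.Icc_self, Finset.sum_singleton]
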